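/- Let n ≥ 1 and let A be a real symmetric n×n matrix which is negative definite, i.e. vᵀAv < 0 for every nonzero v ∈ ℝⁿ. Then A is invertible, for all indices a, b the function t ↦ (exp(tA))_{a,b} is integrable on [0,∞), and ∫_{[0,∞)} (exp(tA))_{a,b} dt = ((−A)^{−1})_{a,b}, where exp denotes the matrix exponential. -/

import Mathlib

open MeasureTheory
open scoped Matrix

lemma stmt7_aux_int (l : ℝ) (hl : l < 0) :
    IntegrableOn (fun t : ℝ => Real.exp (t * l)) (Set.Ici 0) ∧
    ∫ t in Set.Ici (0:ℝ), Real.exp (t * l) = (-l)⁻¹ := by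
  have hl' : 0 < -l := by linarith
  have hfun : (fun t : ℝ => Real.exp (t * l)) = fun t : ℝ => Real.exp (-(-l) * t) := by
    ext t; ring_nf
  have hint : IntegrableOn (fun t : ℝ => Real.exp (t * l)) (Set.Ioi 0) := by
    rw [hfun]; exact exp_neg_integrableOn_Ioi 0 hl'
  have hintIci : IntegrableOn (fun t : ℝ => Real.exp (t * l)) (Set.Ici 0) :=
    Iff.mpr integrableOn_Ici_iff_integrableOn_Ioi hint
  refine ⟨hintIci, ?_⟩
  rw [MeasureTheory.integral_Ici_eq_integral_Ioi]
  have hderiv : ∀ x ∈ Set.Ioi (0:ℝ),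
      HasDerivAt (fun t => Real.exp (t * l) / l) (Real.exp (x * l)) x := by
    intro x _
    have h1 : HasDerivAt (fun t : ℝ => t * l) l x := by
      simpa using (hasDerivAt_id x).mul_const l
    have h2 := (Real.hasDerivAt_exp (x * l)).comp x h1
    have h3 := h2.div_const l
    have hne : l ≠ 0 := ne_of_lt hl
    have heq : Real.exp (x * l) * l / l = Real.exp (x * l) := by
      field_simp
    rwa [heq] at h3
  have hcont : ContinuousWithinAt (fun t => Real.exp (t * l) / l) (Set.Ici 0) 0 :=
    (Continuous.continuousWithinAt (by continuity))
  have htend : Filter.Tendsto (fun t => Real.exp (t * l) / l) Filter.atTop (nhds 0) := by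
    have h1 : Filter.Tendsto (fun t : ℝ => -l * t) Filter.atTop Filter.atTop :=
      Filter.Tendsto.const_mul_atTop hl' Filter.tendsto_id
    have h2 : Filter.Tendsto (fun t : ℝ => Real.exp (-(-l * t))) Filter.atTop (nhds 0) :=
      Real.tendsto_exp_neg_atTop_nhds_zero.comp h1
    have h3 : (fun t : ℝ => Real.exp (t * l) / l) = fun t : ℝ => Real.exp (-(-l * t)) * l⁻¹ := by
      ext t; ring_nf
    rw [h3]
    simpa using h2.mul_const l⁻¹
  have := MeasureTheory.integral_Ioi_of_hasDerivAt_of_tendsto hcont hderiv hint htend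
  rw [this, zero_mul, Real.exp_zero, inv_neg, zero_sub, one_div]

/-- If `A` is a real symmetric negative-definite `n×n` matrix (`n ≥ 1`),
then `A` is invertible, `t ↦ (exp(tA))_{a,b}` is integrable on `[0,∞)`, and
`∫_{[0,∞)} (exp(tA))_{a,b} dt = ((−A)⁻¹)_{a,b}`. -/
theorem stmt_7 (n : ℕ) (hn : 1 ≤ n) (A : Matrix (Fin n) (Fin n) ℝ)
    (hsymm : A.IsSymm)
    (hneg : ∀ v : Fin n → ℝ, v ≠ 0 → v ⬝ᵥ A.mulVec v < 0) :
    IsUnit A ∧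
    (∀ a b : Fin n,
      IntegrableOn (fun t : ℝ => NormedSpace.exp (t • A) a b) (Set.Ici 0)) ∧
    (∀ a b : Fin n,
      ∫ t in Set.Ici (0 : ℝ), NormedSpace.exp (t • A) a b = (-A)⁻¹ a b) := by
  classical
  have hH : A.IsHermitian := by
    have : Aᴴ = Aᵀ := by ext i j; simp [Matrix.conjTranspose_apply]
    rw [Matrix.IsHermitian, this]; exact hsymm
  set U : Matrix (Fin n) (Fin n) ℝ := (hH.eigenvectorUnitary : Matrix (Fin n) (Fin n) ℝ) with hU
  set lam : Fin n → ℝ := hH.eigenvalues with hlamdef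
  -- eigenvalues are negative
  have hlam : ∀ i, lam i < 0 := by
    intro i
    set v : Fin n → ℝ := ⇑(hH.eigenvectorBasis i) with hv
    have hvne : v ≠ 0 := by
      have := hH.eigenvectorBasis.orthonormal.ne_zero i
      intro h
      apply this
      ext j
      exact congrFun h j
    have hAv : A *ᵥ v = lam i • v := hH.mulVec_eigenvectorBasis i
    have h1 : v ⬝ᵥ A.mulVec v = lam i * (v ⬝ᵥ v) := by
      rw [hAv, dotProduct_smul, smul_eq_mul]
    have h2 : 0 < v ⬝ᵥ v := by
      have : v ⬝ᵥ v = ∑ j, v j ^ 2 := by simp [dotProduct, sq]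
      rw [this]
      apply Finset.sum_pos' (fun j _ => sq_nonneg _)
      obtain ⟨j, hj⟩ := Function.ne_iff.mp hvne
      exact ⟨j, Finset.mem_univ j, pow_two_pos_of_ne_zero hj⟩
    have := hneg v hvne
    nlinarith
  -- unitary facts
  have hUr : U * star U = 1 := Matrix.mem_unitaryGroup_iff.mp hH.eigenvectorUnitary.2
  have hUl : star U * U = 1 := Matrix.mem_unitaryGroup_iff'.mp hH.eigenvectorUnitary.2
  have hUunit : IsUnit U := by
    have hdet : U.det * (star U).det = 1 := by rw [← Matrix.det_mul, hUr, Matrix.det_one]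
    exact (Matrix.isUnit_iff_isUnit_det U).mpr (isUnit_iff_exists_inv.mpr ⟨_, hdet⟩)
  have hUinv : U⁻¹ = star U := Matrix.inv_eq_right_inv hUr
  have hco : (RCLike.ofReal ∘ hH.eigenvalues : Fin n → ℝ) = lam := by
    ext i; simp [hlamdef]
  have hspec : A = U * Matrix.diagonal lam * star U := by
    have h := hH.spectral_theorem
    rwa [hco] at h
  -- exponential formula
  have hexp : ∀ t : ℝ, NormedSpace.exp (t • A) =
      U * Matrix.diagonal (fun i => Real.exp (t * lam i)) * star U := by
    intro t
    have h1 : t • A = U * Matrix.diagonal (fun i => t * lam i) * U⁻¹ := by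
      rw [hUinv]
      conv_lhs => rw [hspec]
      rw [← smul_mul_assoc, ← mul_smul_comm]
      congr 1
      ext i j
      simp [Matrix.diagonal_apply, mul_ite]
      ring
    rw [h1, Matrix.exp_conj U _ hUunit, Matrix.exp_diagonal, hUinv]
    have hfn : NormedSpace.exp (fun i => t * lam i) =
        fun i => Real.exp (t * lam i) := by
      ext i; rw [Pi.coe_exp, ← Real.exp_eq_exp_ℝ]
    rw [hfn]
  -- entrywise formula for conjugated diagonal matrices
  have hentry : ∀ (d : Fin n → ℝ) (a b : Fin n),
      (U * Matrix.diagonal d * star U) a b = ∑ i, U a i * U b i * d i := by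
    intro d a b
    rw [Matrix.mul_apply]
    refine Finset.sum_congr rfl fun i _ => ?_
    rw [Matrix.mul_diagonal, Matrix.star_apply, star_trivial]
    ring
  -- the candidate inverse of -A
  set B : Matrix (Fin n) (Fin n) ℝ :=
    U * Matrix.diagonal (fun i => (-lam i)⁻¹) * star U with hB
  have hnegA : -A = U * Matrix.diagonal (fun i => -lam i) * star U := by
    have hd : Matrix.diagonal (fun i => -lam i) = -Matrix.diagonal lam := by
      ext i j
      by_cases h : i = j <;> simp [Matrix.diagonal_apply, h]
    rw [hd]
    conv_lhs => rw [hspec]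
    rw [mul_neg, neg_mul]
  have hABone : (-A) * B = 1 := by
    rw [hnegA, hB]
    have : U * Matrix.diagonal (fun i => -lam i) * star U *
        (U * Matrix.diagonal (fun i => (-lam i)⁻¹) * star U)
        = U * (Matrix.diagonal (fun i => -lam i) * (star U * U) *
            Matrix.diagonal (fun i => (-lam i)⁻¹)) * star U := by
      simp only [Matrix.mul_assoc]
    rw [this, hUl, Matrix.mul_one, Matrix.diagonal_mul_diagonal]
    have hdiag : Matrix.diagonal (fun i => -lam i * (-lam i)⁻¹) = (1 : Matrix (Fin n) (Fin n) ℝ) := by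
      have : (fun i => -lam i * (-lam i)⁻¹) = fun _ => (1:ℝ) := by
        ext i
        exact mul_inv_cancel₀ (by have := hlam i; intro h; simp at h; linarith)
      rw [this, Matrix.diagonal_one]
    rw [hdiag, Matrix.mul_one, hUr]
  have hinvB : (-A)⁻¹ = B := Matrix.inv_eq_right_inv hABone
  -- invertibility of A
  have hunit : IsUnit A := by
    refine (Matrix.isUnit_iff_isUnit_det A).mpr (isUnit_iff_ne_zero.mpr ?_)
    have hdet : A.det = ∏ i, lam i := by
      have := hH.det_eq_prod_eigenvalues
      simpa [hlamdef] using this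
    rw [hdet]
    exact Finset.prod_ne_zero_iff.mpr fun i _ => ne_of_lt (hlam i)
  -- integrability
  have hintg : ∀ a b : Fin n,
      IntegrableOn (fun t : ℝ => NormedSpace.exp (t • A) a b) (Set.Ici 0) := by
    intro a b
    have heq : (fun t : ℝ => NormedSpace.exp (t • A) a b) =
        fun t : ℝ => ∑ i, U a i * U b i * Real.exp (t * lam i) := by
      ext t
      rw [hexp t, hentry]
    rw [heq]
    apply MeasureTheory.integrable_finset_sum
    intro i _
    exact ((stmt7_aux_int (lam i) (hlam i)).1.const_mul (U a i * U b i))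
  refine ⟨hunit, hintg, ?_⟩
  intro a b
  have heq : (fun t : ℝ => NormedSpace.exp (t • A) a b) =
      fun t : ℝ => ∑ i, U a i * U b i * Real.exp (t * lam i) := by
    ext t
    rw [hexp t, hentry]
  calc ∫ t in Set.Ici (0:ℝ), NormedSpace.exp (t • A) a b
      = ∫ t in Set.Ici (0:ℝ), ∑ i, U a i * U b i * Real.exp (t * lam i) := by rw [heq]
    _ = ∑ i, ∫ t in Set.Ici (0:ℝ), U a i * U b i * Real.exp (t * lam i) := by
        apply MeasureTheory.integral_finset_sum
        intro i _
        exact ((stmt7_aux_int (lam i) (hlam i)).1.const_mul (U a i * U b i))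
    _ = ∑ i, U a i * U b i * (-lam i)⁻¹ := by
        refine Finset.sum_congr rfl fun i _ => ?_
        rw [MeasureTheory.integral_const_mul, (stmt7_aux_int (lam i) (hlam i)).2]
    _ = (-A)⁻¹ a b := by
        rw [hinvB, hB, hentry]
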